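/- If (t*, c*, λ*) is a feasible solution of the LP: maximize t subject to t·∑_{j∈S} cⁱ_j ≤ ∑_{j∈S} c_j for all i∈[N] and all S ⊆ [n] with |S| = k, c = ∑_i λ_i cⁱ, ∑_i λ_i = 1, λ ≥ 0, where every x ∈ X has at least k ones and t* > 0, then any minimizer x(c*) of c*·x over X satisfies max_{i∈[N]} cⁱ·x(c*) ≤ (1/t*) · min_{x∈X} max_{i∈[N]} cⁱ·x. -/

import Mathlib

open Finset

lemma count_mem {α : Type*} [DecidableEq α] (S : Finset α) (k : ℕ) (hk : 0 < k) (a : α) (ha : a ∈ S) :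
    ((S.powersetCard k).filter (fun T => a ∈ T)).card = (S.card - 1).choose (k - 1) := by
  rw [← Finset.card_erase_of_mem ha, ← Finset.card_powersetCard]
  refine Finset.card_nbij' (fun T => T.erase a) (fun T => insert a T) ?_ ?_ ?_ ?_
  · intro T hT
    simp only [mem_coe, mem_filter, mem_powersetCard] at hT
    simp only [mem_coe, mem_powersetCard]
    refine ⟨fun x hx => ?_, ?_⟩
    · simp only [mem_erase] at hx ⊢
      exact ⟨hx.1, hT.1.1 hx.2⟩
    · rw [Finset.card_erase_of_mem hT.2, hT.1.2]
  · intro T hT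
    simp only [mem_coe, mem_powersetCard] at hT
    have haT : a ∉ T := fun h => (mem_erase.mp (hT.1 h)).1 rfl
    simp only [mem_coe, mem_filter, mem_powersetCard, mem_insert]
    refine ⟨⟨fun x hx => ?_, ?_⟩, Or.inl trivial⟩
    · rcases mem_insert.mp hx with h | h
      · exact h ▸ ha
      · exact (mem_erase.mp (hT.1 h)).2
    · rw [Finset.card_insert_of_notMem haT, hT.2]
      omega
  · intro T hT
    exact Finset.insert_erase (mem_filter.mp hT).2
  · intro T hT
    simp only [mem_coe, mem_powersetCard] at hT
    exact Finset.erase_insert (fun h => (mem_erase.mp (hT.1 h)).1 rfl)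

lemma avg_sum {α : Type*} [DecidableEq α] (S : Finset α) (k : ℕ) (hk : 0 < k) (f : α → ℝ) :
    ∑ T ∈ S.powersetCard k, ∑ j ∈ T, f j
      = ((S.card - 1).choose (k - 1) : ℝ) * ∑ j ∈ S, f j := by
  have h1 : ∀ T ∈ S.powersetCard k, ∑ j ∈ T, f j = ∑ j ∈ S, if j ∈ T then f j else 0 := by
    intro T hT
    rw [Finset.sum_ite_mem, Finset.inter_comm, Finset.inter_eq_left.mpr (mem_powersetCard.mp hT).1]
  rw [Finset.sum_congr rfl h1, Finset.sum_comm, Finset.mul_sum]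
  refine Finset.sum_congr rfl fun j hj => ?_
  rw [← Finset.sum_filter, Finset.sum_const, count_mem S k hk j hj, nsmul_eq_mul]

lemma extend_ineq {α : Type*} [DecidableEq α] (S : Finset α) (k : ℕ) (hk : 0 < k)
    (hkS : k ≤ S.card) (t : ℝ) (g h : α → ℝ)
    (hc : ∀ T ⊆ S, T.card = k → t * ∑ j ∈ T, g j ≤ ∑ j ∈ T, h j) :
    t * ∑ j ∈ S, g j ≤ ∑ j ∈ S, h j := by
  have hC : (0:ℝ) < ((S.card - 1).choose (k - 1) : ℝ) := by
    have := Nat.choose_pos (show k - 1 ≤ S.card - 1 by omega)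
    exact_mod_cast this
  rw [← mul_le_mul_iff_right₀ hC, ← avg_sum S k hk h, mul_left_comm, ← avg_sum S k hk g,
    Finset.mul_sum]
  apply Finset.sum_le_sum
  intro T hT
  obtain ⟨hTS, hTc⟩ := mem_powersetCard.mp hT
  exact hc T hTS hTc

noncomputable def maxCost {n N : ℕ} (hN : 0 < N) (c : Fin N → Fin n → ℝ) (x : Fin n → ℝ) : ℝ :=
  Finset.univ.sup' (Finset.univ_nonempty_iff.mpr (Fin.pos_iff_nonempty.mp hN))
    fun i => ∑ j, c i j * x j

lemma sum_restrict {n : ℕ} (x : Fin n → ℝ) (hx : ∀ j, x j = 0 ∨ x j = 1) (g : Fin n → ℝ) :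
    ∑ j, g j * x j = ∑ j ∈ univ.filter (fun j => x j = 1), g j := by
  rw [← Finset.sum_filter_add_sum_filter_not univ (fun j => x j = 1) (fun j => g j * x j)]
  have h1 : ∑ j ∈ univ.filter (fun j => ¬ x j = 1), g j * x j = 0 := by
    apply Finset.sum_eq_zero
    intro j hj
    rcases hx j with h | h
    · rw [h, mul_zero]
    · exact absurd h (mem_filter.mp hj).2
  rw [h1, add_zero]
  exact Finset.sum_congr rfl fun j hj => by rw [(mem_filter.mp hj).2, mul_one]

theorem LP_feasible_approx {n N k : ℕ} (hN : 0 < N) (hk : 0 < k)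
    (X : Finset (Fin n → ℝ)) (hXne : X.Nonempty)
    (hX01 : ∀ x ∈ X, ∀ j, x j = 0 ∨ x j = 1)
    (hXk : ∀ x ∈ X, (k : ℝ) ≤ ∑ j, x j)
    (cs : Fin N → Fin n → ℝ) (hcs : ∀ i j, 0 ≤ cs i j)
    (tstar : ℝ) (htstar : 0 < tstar)
    (cstar : Fin n → ℝ) (lam : Fin N → ℝ)
    (hlam : ∀ i, 0 ≤ lam i) (hlamsum : ∑ i, lam i = 1)
    (hcstar : ∀ j, cstar j = ∑ i, lam i * cs i j)
    (hcons : ∀ i, ∀ S : Finset (Fin n), S.card = k →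
      tstar * ∑ j ∈ S, cs i j ≤ ∑ j ∈ S, cstar j)
    (xc : Fin n → ℝ) (hxcX : xc ∈ X)
    (hxcmin : ∀ x ∈ X, ∑ j, cstar j * xc j ≤ ∑ j, cstar j * x j) :
    maxCost hN cs xc ≤ (1 / tstar) * X.inf' hXne (fun x => maxCost hN cs x) := by
  set S : Finset (Fin n) := univ.filter (fun j => xc j = 1) with hS
  have hxc01 := hX01 xc hxcX
  have hkS : k ≤ S.card := by
    have h1 : (k : ℝ) ≤ ∑ j, xc j := hXk xc hxcX
    have h2 : ∑ j, xc j = (S.card : ℝ) := by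
      have := sum_restrict xc hxc01 (fun _ => 1)
      simp only [one_mul] at this
      rw [this, Finset.sum_const, nsmul_eq_mul, mul_one]
    rw [h2] at h1
    exact_mod_cast h1
  -- key inequality for xc
  have key : ∀ i, tstar * ∑ j, cs i j * xc j ≤ ∑ j, cstar j * xc j := by
    intro i
    rw [sum_restrict xc hxc01 (cs i), sum_restrict xc hxc01 cstar]
    exact extend_ineq S k hk hkS tstar (cs i) cstar (fun T _ hTc => hcons i T hTc)
  -- cstar · x ≤ maxCost x for any x
  have hub : ∀ x, ∑ j, cstar j * x j ≤ maxCost hN cs x := by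
    intro x
    have h1 : ∑ j, cstar j * x j = ∑ i, lam i * ∑ j, cs i j * x j := by
      simp_rw [hcstar, Finset.sum_mul, Finset.mul_sum]
      rw [Finset.sum_comm]
      congr 1; ext i; congr 1; ext j; ring
    rw [h1]
    calc ∑ i, lam i * ∑ j, cs i j * x j
        ≤ ∑ i, lam i * maxCost hN cs x := by
          apply Finset.sum_le_sum
          intro i _
          have : ∑ j, cs i j * x j ≤ maxCost hN cs x :=
            Finset.le_sup' (fun i => ∑ j, cs i j * x j) (mem_univ i)
          exact mul_le_mul_of_nonneg_left this (hlam i)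
      _ = maxCost hN cs x := by rw [← Finset.sum_mul, hlamsum, one_mul]
  rw [one_div, inv_mul_eq_div]
  apply Finset.sup'_le
  intro i _
  rw [le_div_iff₀ htstar, mul_comm]
  apply Finset.le_inf'
  intro x hx
  calc tstar * ∑ j, cs i j * xc j
      ≤ ∑ j, cstar j * xc j := key i
    _ ≤ ∑ j, cstar j * x j := hxcmin x hx
    _ ≤ maxCost hN cs x := hub x
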